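/- Let v be a valuation of K and ℋ a closed subspace of 𝒢_K. Then v((I_v ∩ ℋ)^⊥) is the saturation of v(ℋ^⊥) in the value group vK. In particular, if ℋ ⊆ I_v then v(ℋ^⊥) is a saturated subgroup of vK. -/

import Mathlib

/- Common definitions: Milnor K-theory of fields (possibly modulo a subgroup of `Kˣ`),
its rationalization, the dual space `𝒢_K` with the relation of alternating pairs,
and valuation-theoretic subspaces, following the paper. -/

set_option synthInstance.maxHeartbeats 400000
set_option maxHeartbeats 1000000

open scoped TensorProduct

namespace Paper

section Milnor

variable (K : Type) [Field K]

/-- The Steinberg relation together with the relation killing a subgroup `T ≤ Kˣ`; used to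
present `K^M_*(K|T) := K^M_*(K)/⟨T⟩` as a quotient of the tensor algebra of the
`ℤ`-module `Kˣ`. -/
inductive MilnorRel (T : Subgroup Kˣ) :
    TensorAlgebra ℤ (Additive Kˣ) → TensorAlgebra ℤ (Additive Kˣ) → Prop
  | steinberg (x y : Kˣ) (h : (x : K) + (y : K) = 1) :
      MilnorRel T (TensorAlgebra.ι ℤ (Additive.ofMul x) * TensorAlgebra.ι ℤ (Additive.ofMul y)) 0
  | subgroup (x : Kˣ) (h : x ∈ T) :
      MilnorRel T (TensorAlgebra.ι ℤ (Additive.ofMul x)) 0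

/-- The Milnor K-theory ring modulo a subgroup: `K^M_*(K|T)`.  For `T = ⊥` this is
Milnor K-theory `K^M_*(K)` itself. -/
abbrev MilnorK (T : Subgroup Kˣ) := RingQuot (MilnorRel K T)

/-- The canonical quotient map from the tensor algebra. -/
noncomputable def milnorMk (T : Subgroup Kˣ) :
    TensorAlgebra ℤ (Additive Kˣ) →+* MilnorK K T :=
  RingQuot.mkRingHom (MilnorRel K T)

/-- The symbol `{x}` in degree one of `K^M_*(K|T)`. -/
noncomputable def symbol (T : Subgroup Kˣ) (x : Kˣ) : MilnorK K T :=
  milnorMk K T (TensorAlgebra.ι ℤ (Additive.ofMul x))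

/-- The degree `n` part of `K^M_*(K|T)`, i.e. the image of the degree `n` part of the
tensor algebra. -/
noncomputable def milnorDeg (T : Subgroup Kˣ) (n : ℕ) : AddSubgroup (MilnorK K T) :=
  AddSubgroup.map (milnorMk K T).toAddMonoidHom
    (Submodule.toAddSubgroup
      ((LinearMap.range (TensorAlgebra.ι ℤ (M := Additive Kˣ))) ^ n))

/-- A ring isomorphism between Milnor K-rings is graded if it maps each degree onto the
corresponding degree. -/
def IsGradedMilnorIso {K L : Type} [Field K] [Field L] {T : Subgroup Kˣ} {S : Subgroup Lˣ}
    (φ : MilnorK K T ≃+* MilnorK L S) : Prop :=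
  ∀ n : ℕ, AddSubgroup.map φ.toRingHom.toAddMonoidHom (milnorDeg K T n) = milnorDeg L S n

/-- `𝒦_*(K|T) := ℚ ⊗_ℤ K^M_*(K|T)`. -/
abbrev MilnorKQ (T : Subgroup Kˣ) := ℚ ⊗[ℤ] MilnorK K T

/-- The symbol `{x}` in degree one of `𝒦_*(K|T)`. -/
noncomputable def symbolQ (T : Subgroup Kˣ) (x : Kˣ) : MilnorKQ K T :=
  1 ⊗ₜ symbol K T x

/-- The degree `n` part of `𝒦_*(K|T)`. -/
noncomputable def milnorDegQ (T : Subgroup Kˣ) (n : ℕ) : Submodule ℚ (MilnorKQ K T) :=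
  Submodule.span ℚ
    ((fun a => (1 : ℚ) ⊗ₜ a) ''
      ((milnorMk K T) ''
        ((LinearMap.range (TensorAlgebra.ι ℤ (M := Additive Kˣ))) ^ n : Submodule ℤ _)))

/-- An isomorphism of the graded `ℚ`-algebras `𝒦_*(K|T)` is graded if it maps each degree
onto the corresponding degree. -/
def IsGradedIsoQ {K L : Type} [Field K] [Field L] {T : Subgroup Kˣ} {S : Subgroup Lˣ}
    (φ : MilnorKQ K T ≃ₐ[ℚ] MilnorKQ L S) : Prop :=
  ∀ n : ℕ, Submodule.map φ.toLinearMap (milnorDegQ K T n) = milnorDegQ L S n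

variable {K}

/-- The ring homomorphism `K^M_*(K|T) → K^M_*(L|S)` induced by a field embedding `σ`
with `σ(T) ⊆ S`. -/
noncomputable def milnorMap {L : Type} [Field L] (σ : K →+* L)
    (T : Subgroup Kˣ) (S : Subgroup Lˣ)
    (h : ∀ x : Kˣ, x ∈ T → Units.map (σ : K →* L) x ∈ S) :
    MilnorK K T →+* MilnorK L S :=
  RingQuot.lift
    ⟨(TensorAlgebra.lift ℤ
        (((milnorMk L S).toAddMonoidHom.comp
          ((TensorAlgebra.ι ℤ (M := Additive Lˣ)).toAddMonoidHom.comp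
            (MonoidHom.toAdditive (Units.map (σ : K →* L))))).toIntLinearMap)).toRingHom,
     by
      rintro a b (⟨x, y, hxy⟩ | ⟨x, hx⟩)
      · simp only [AlgHom.toRingHom_eq_coe, RingHom.coe_coe, map_mul, map_zero,
          TensorAlgebra.lift_ι_apply]
        show milnorMk L S (TensorAlgebra.ι ℤ (Additive.ofMul (Units.map (σ : K →* L) x))) *
          milnorMk L S (TensorAlgebra.ι ℤ (Additive.ofMul (Units.map (σ : K →* L) y))) = 0
        rw [← map_mul]
        have hsum : ((Units.map (σ : K →* L) x : Lˣ) : L) +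
            ((Units.map (σ : K →* L) y : Lˣ) : L) = 1 := by
          simpa using congrArg σ hxy
        exact (RingQuot.mkRingHom_rel
          (MilnorRel.steinberg (T := S) _ _ hsum)).trans (map_zero _)
      · simp only [AlgHom.toRingHom_eq_coe, RingHom.coe_coe, map_zero,
          TensorAlgebra.lift_ι_apply]
        show milnorMk L S (TensorAlgebra.ι ℤ (Additive.ofMul (Units.map (σ : K →* L) x))) = 0
        exact (RingQuot.mkRingHom_rel
          (MilnorRel.subgroup (T := S) _ (h x hx))).trans (map_zero _)⟩

/-- The induced ring homomorphism `𝒦_*(K|T) → 𝒦_*(L|S)`. -/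
noncomputable def milnorMapQ {L : Type} [Field L] (σ : K →+* L)
    (T : Subgroup Kˣ) (S : Subgroup Lˣ)
    (h : ∀ x : Kˣ, x ∈ T → Units.map (σ : K →* L) x ∈ S) :
    MilnorKQ K T →+* MilnorKQ L S :=
  (Algebra.TensorProduct.map (AlgHom.id ℤ ℚ) (milnorMap σ T S h).toIntAlgHom).toRingHom

end Milnor

section Dual

variable (K : Type) [Field K]

/-- `𝒢_K := Hom_ℤ(Kˣ, ℚ)`. -/
abbrev GK := Additive Kˣ →ₗ[ℤ] ℚ

/-- The weak topology on `𝒢_K`: the topology of pointwise convergence, `ℚ` being discrete. -/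
noncomputable def gkTopology : TopologicalSpace (GK K) :=
  TopologicalSpace.induced (fun (f : GK K) (x : Additive Kˣ) => f x)
    (@Pi.topologicalSpace _ _ (fun _ => ⊥))

/-- A subspace of `𝒢_K` is closed if it is closed in the weak topology. -/
def IsClosedSubspace (H : Submodule ℚ (GK K)) : Prop :=
  @IsClosed _ (gkTopology K) (H : Set (GK K))

variable {K}

/-- `f, g ∈ 𝒢_K` form an alternating pair: `ℛ_K(f,g)`. -/
def AltPair (f g : GK K) : Prop :=
  ∀ x y : Kˣ, (x : K) + (y : K) = 1 →
    f (Additive.ofMul x) * g (Additive.ofMul y) = f (Additive.ofMul y) * g (Additive.ofMul x)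

variable (K)

/-- `𝒢_{K|T}`: the functionals vanishing on `T`. -/
def GKrel (T : Subgroup Kˣ) : Submodule ℚ (GK K) where
  carrier := {f | ∀ x ∈ T, f (Additive.ofMul x) = 0}
  add_mem' := by intro f g hf hg x hx; simp [hf x hx, hg x hx]
  zero_mem' := by intro x hx; simp
  smul_mem' := by intro c f hf x hx; simp [hf x hx]

/-- The `ℛ_K`-centralizer `C_K(𝒟)` of a subspace `𝒟 ⊆ 𝒢_K`. -/
def RCentralizer (D : Submodule ℚ (GK K)) : Submodule ℚ (GK K) where
  carrier := {f | ∀ g ∈ D, AltPair f g}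
  add_mem' := by
    intro f1 f2 h1 h2 g hg x y hxy
    have e1 := h1 g hg x y hxy
    have e2 := h2 g hg x y hxy
    simp only [LinearMap.add_apply]
    rw [add_mul, add_mul, e1, e2]
  zero_mem' := by intro g hg x y hxy; simp
  smul_mem' := by
    intro c f hf g hg x y hxy
    simp only [LinearMap.smul_apply, smul_eq_mul]
    rw [mul_assoc, mul_assoc, hf g hg x y hxy]

/-- The `ℛ_K`-centre `Z_K(𝒟)` of a subspace `𝒟 ⊆ 𝒢_K`. -/
def RCentre (D : Submodule ℚ (GK K)) : Submodule ℚ (GK K) :=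
  D ⊓ RCentralizer K D

/-- The orthogonal subgroup `ℋ^⊥ ⊆ Kˣ` of a subspace `ℋ ⊆ 𝒢_K`. -/
def perpSubgroup (H : Submodule ℚ (GK K)) : Subgroup Kˣ where
  carrier := {x | ∀ f ∈ H, f (Additive.ofMul x) = 0}
  one_mem' := by
    intro f hf
    show f (Additive.ofMul 1) = 0
    rw [ofMul_one, map_zero]
  mul_mem' := by
    intro x y hx hy f hf
    have : Additive.ofMul (x * y) = Additive.ofMul x + Additive.ofMul y := rfl
    rw [this, map_add, hx f hf, hy f hf, add_zero]
  inv_mem' := by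
    intro x hx f hf
    have : Additive.ofMul x⁻¹ = -Additive.ofMul x := rfl
    rw [this, map_neg, hx f hf, neg_zero]

/-- `I_v := 𝒢_{K|U_v}` for a valuation (given by its valuation subring `A`). -/
noncomputable def Ival (A : ValuationSubring K) : Submodule ℚ (GK K) := GKrel K A.unitGroup

/-- `D_v := 𝒢_{K|U_v^1}` for a valuation (given by its valuation subring `A`). -/
def Dval (A : ValuationSubring K) : Submodule ℚ (GK K) := GKrel K A.principalUnitGroup

/-- `A` is the valuation ring of the minimal valuation `v_ℐ` attached to a valuative
subspace `ℐ`: one has `ℐ ⊆ I_v`, and `v` is minimal with this property.  Valuations are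
ordered by coarsening (`v ≤ w` iff `v` is a coarsening of `w`, i.e. `𝒪_w ⊆ 𝒪_v`), so
minimality of the valuation means maximality of the valuation subring. -/
def IsMinValuationFor (A : ValuationSubring K) (I : Submodule ℚ (GK K)) : Prop :=
  I ≤ Ival K A ∧ ∀ B : ValuationSubring K, I ≤ Ival K B → B ≤ A

/-- The subgroup of `Kˣ` consisting of the units of a subfield `k ⊆ K`. -/
def subfieldUnits (k : Subfield K) : Subgroup Kˣ where
  carrier := {x | (x : K) ∈ k}
  one_mem' := k.one_mem
  mul_mem' := by intro a b ha hb; exact k.mul_mem ha hb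
  inv_mem' := by
    intro a ha
    show ((a⁻¹ : Kˣ) : K) ∈ k
    rw [Units.val_inv_eq_inv_val]
    exact k.inv_mem ha

/-- The valuation `v` (given by its valuation subring `A`) is `T`-visible:
`I_v ∩ 𝒢_{K|T} = Z_K(D_v ∩ 𝒢_{K|T}) ≠ D_v ∩ 𝒢_{K|T}`, and `v = v_ℐ` for
`ℐ = I_v ∩ 𝒢_{K|T}`. -/
def IsVisible (T : Subgroup Kˣ) (A : ValuationSubring K) : Prop :=
  Ival K A ⊓ GKrel K T = RCentre K (Dval K A ⊓ GKrel K T) ∧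
  Ival K A ⊓ GKrel K T ≠ Dval K A ⊓ GKrel K T ∧
  IsMinValuationFor K A (Ival K A ⊓ GKrel K T)

/-- A subgroup of the value group `vK = Kˣ/U_v` of the valuation corresponding to `A` is
represented by a subgroup `H` of `Kˣ` containing `U_v = A.unitGroup`; `H/U_v` is convex in
`vK` iff whenever `x ∈ H` and `0 ≤ v(y) ≤ v(x)`, also `y ∈ H`. -/
def IsConvexInValueGroup (A : ValuationSubring K) (H : Subgroup Kˣ) : Prop :=
  A.unitGroup ≤ H ∧
    ∀ x y : Kˣ, x ∈ H → (y : K) ∈ A → ((x : K) * (y : K)⁻¹) ∈ A → y ∈ H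

/-- The residue field `kv` of the restriction of the valuation to a subfield `k ⊆ K`,
as a subfield of the residue field `Kv`; it is the set of residues of elements
of `k ∩ 𝒪_v` (which is already closed under the field operations). -/
noncomputable def residueSubfield (A : ValuationSubring K) (k : Subfield K) :
    Subfield (IsLocalRing.ResidueField A) :=
  Subfield.closure ((IsLocalRing.residue A) '' {a : A | (a : K) ∈ k})

end Dual

section KQ

variable (K : Type) [Field K]

/-- A subgroup `T ≤ Kˣ` viewed as a `ℤ`-submodule of `Additive Kˣ`. -/
def subgroupToSubmodule (T : Subgroup Kˣ) : Submodule ℤ (Additive Kˣ) :=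
  AddSubgroup.toIntSubmodule (Subgroup.toAddSubgroup T)

/-- `𝒦_{K|T} := ℚ ⊗_ℤ (Kˣ/T) = 𝒦_1(K|T)`. -/
abbrev KQ (T : Subgroup Kˣ) := ℚ ⊗[ℤ] (Additive Kˣ ⧸ subgroupToSubmodule K T)

/-- The class of `x ∈ Kˣ` in `𝒦_{K|T}`; this is the canonical map `Kˣ → 𝒦_{K|T}`. -/
noncomputable def symbQ (T : Subgroup Kˣ) (x : Kˣ) : KQ K T :=
  (1 : ℚ) ⊗ₜ Submodule.Quotient.mk (Additive.ofMul x)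

/-- The map `Kˣ → 𝒦_1(K|T)`, `x ↦ {x}`, as a `ℤ`-linear map on `Additive Kˣ`. -/
noncomputable def symbolQLinear (T : Subgroup Kˣ) : Additive Kˣ →ₗ[ℤ] MilnorKQ K T :=
  ((Algebra.TensorProduct.includeRight :
      MilnorK K T →ₐ[ℤ] MilnorKQ K T).toLinearMap.toAddMonoidHom.comp
    ((milnorMk K T).toAddMonoidHom.comp
      (TensorAlgebra.ι ℤ (M := Additive Kˣ)).toAddMonoidHom)).toIntLinearMap

/-- The canonical identification map `𝒦_{K|T} = 𝒦_1(K|T) → 𝒦_*(K|T)` onto degree one. -/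
noncomputable def KQtoMilnor (T : Subgroup Kˣ) : KQ K T →ₗ[ℚ] MilnorKQ K T :=
  LinearMap.liftBaseChange ℚ <|
    Submodule.liftQ (subgroupToSubmodule K T) (symbolQLinear K T)
      (by
        intro x hx
        have h2 := RingQuot.mkRingHom_rel (MilnorRel.subgroup (T := T) (Additive.toMul x) hx)
        simp only [LinearMap.mem_ker]
        show (Algebra.TensorProduct.includeRight : MilnorK K T →ₐ[ℤ] MilnorKQ K T)
          (milnorMk K T (TensorAlgebra.ι ℤ x)) = 0
        rw [show milnorMk K T (TensorAlgebra.ι ℤ x) = 0 from h2.trans (map_zero _), map_zero])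

/-- A subspace `ℋ ⊆ 𝒦_{K|T}` is Milnor-closed if for every nonzero `s ∈ ℋ` and every
`t ∈ 𝒦_{K|T}` with `{s,t} = 0` in `𝒦_2(K|T)`, one has `t ∈ ℋ`. -/
def MilnorClosed (T : Subgroup Kˣ) (H : Submodule ℚ (KQ K T)) : Prop :=
  ∀ s ∈ H, s ≠ 0 → ∀ t : KQ K T, KQtoMilnor K T s * KQtoMilnor K T t = 0 → t ∈ H

/-- The projection `ℚ ⊗_ℤ Kˣ → 𝒦_{K|T}`. -/
noncomputable def KQproj (T : Subgroup Kˣ) : (ℚ ⊗[ℤ] Additive Kˣ) →ₗ[ℚ] KQ K T :=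
  LinearMap.baseChange ℚ (subgroupToSubmodule K T).mkQ

lemma KQproj_surjective (T : Subgroup Kˣ) : Function.Surjective (KQproj K T) := by
  intro z
  induction z using TensorProduct.induction_on with
  | zero => exact ⟨0, map_zero _⟩
  | tmul a b =>
      obtain ⟨u, hu⟩ := Submodule.Quotient.mk_surjective (subgroupToSubmodule K T) b
      exact ⟨a ⊗ₜ u, by rw [KQproj, LinearMap.baseChange_tmul, Submodule.mkQ_apply, hu]⟩
  | add x y hx hy =>
      obtain ⟨x', hx'⟩ := hx
      obtain ⟨y', hy'⟩ := hy
      exact ⟨x' + y', by rw [map_add, hx', hy']⟩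

/-- The canonical pairing `𝒦_{K|T} × 𝒢_{K|T} → ℚ`.  It takes the correct value
`⟨s, f⟩` whenever `f` vanishes on `T` (in which case the value is independent of the
choice of preimage), and junk values otherwise. -/
noncomputable def gpair (T : Subgroup Kˣ) (f : GK K) (s : KQ K T) : ℚ :=
  (LinearMap.liftBaseChange ℚ f) (Function.surjInv (KQproj_surjective K T) s)

/-- The image of `𝒦_{L|k}` in `𝒦_{K|k}`, i.e. the subspace spanned by the classes of the
elements of `Lˣ`. -/
noncomputable def subfieldSpan (k : Subfield K) (L : Subfield K) :
    Submodule ℚ (KQ K (subfieldUnits K k)) :=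
  Submodule.span ℚ {s | ∃ x : Kˣ, (x : K) ∈ L ∧ s = symbQ K (subfieldUnits K k) x}

end KQ

section FieldTheory

variable (K : Type) [Field K]

/-- `k` is relatively algebraically closed in `K`. -/
def IsRelAlgClosed (k : Subfield K) : Prop := ∀ x : K, IsAlgebraic k x → x ∈ k

/-- The relative algebraic closure of a subfield `M` in `K` (the set of elements of `K`
algebraic over `M`, which is already a subfield). -/
def relAlgClosure (M : Subfield K) : Subfield K :=
  Subfield.closure {x : K | IsAlgebraic M x}

/-- The transcendence degree `trdeg(L|k)` of an extension of subfields of `K`: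
the supremum of the cardinalities of subsets of `L` that are algebraically independent
over `k`.  `trdeg K k ⊤` is `trdeg(K|k)`. -/
noncomputable def trdeg (k L : Subfield K) : Cardinal :=
  ⨆ s : {s : Set K // s ⊆ (L : Set K) ∧ AlgebraicIndependent k ((↑) : s → K)},
    Cardinal.mk s.1

/-- The perfect closure `k^i` of a subfield `k ⊆ K` inside a perfect closure
`iK : K → Ki` of `K` (with respect to the characteristic exponent `p`): the set of
elements with a `p`-power in `iK(k)` (already a subfield). -/
def subPerfectClosure {Ki : Type} [Field Ki] (iK : K →+* Ki) (k : Subfield K) (p : ℕ) :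
    Subfield Ki :=
  Subfield.closure {x : Ki | ∃ n : ℕ, ∃ a : K, a ∈ k ∧ x ^ p ^ n = iK a}

variable {K}

lemma subfield_units_map {L : Type} [Field L] (σ : K →+* L) (k : Subfield K)
    (l : Subfield L) (h : ∀ x ∈ k, σ x ∈ l) :
    ∀ x : Kˣ, x ∈ subfieldUnits K k → Units.map (σ : K →* L) x ∈ subfieldUnits L l :=
  fun x hx => h x hx

lemma mem_subPerfectClosure {Ki : Type} [Field Ki] (iK : K →+* Ki) (k : Subfield K)
    (p : ℕ) : ∀ x ∈ k, iK x ∈ subPerfectClosure K iK k p :=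
  fun x hx => Subfield.subset_closure ⟨0, x, hx, by simp⟩

lemma bot_units_map {L : Type} [Field L] (σ : K →+* L) (S : Subgroup Lˣ) :
    ∀ x : Kˣ, x ∈ (⊥ : Subgroup Kˣ) → Units.map (σ : K →* L) x ∈ S := by
  intro x hx
  rw [Subgroup.mem_bot] at hx
  subst hx
  rw [map_one]
  exact S.one_mem

end FieldTheory



section Proof

variable {K : Type} [Field K]

/-- The saturation of a subgroup of an abelian group. -/
private def satSubgroup (S : Subgroup Kˣ) : Subgroup Kˣ where
  carrier := {y | ∃ n : ℕ, 0 < n ∧ y ^ n ∈ S}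
  one_mem' := ⟨1, one_pos, by simpa using S.one_mem⟩
  mul_mem' := by
    rintro a b ⟨n, hn, ha⟩ ⟨m, hm, hb⟩
    refine ⟨n * m, Nat.mul_pos hn hm, ?_⟩
    have h1 : a ^ (n * m) ∈ S := by rw [pow_mul]; exact pow_mem ha m
    have h2 : b ^ (n * m) ∈ S := by rw [mul_comm n m, pow_mul]; exact pow_mem hb n
    rw [mul_pow]; exact S.mul_mem h1 h2
  inv_mem' := by
    rintro a ⟨n, hn, ha⟩
    exact ⟨n, hn, by rw [inv_pow]; exact S.inv_mem ha⟩

private lemma exists_functional (S : Subgroup Kˣ) (x : Kˣ)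
    (hx : ∀ n : ℕ, 0 < n → x ^ n ∉ S) :
    ∃ g : GK K, (∀ y ∈ S, g (Additive.ofMul y) = 0) ∧ g (Additive.ofMul x) ≠ 0 := by
  classical
  set M : Submodule ℤ (Additive Kˣ) :=
    AddSubgroup.toIntSubmodule (Subgroup.toAddSubgroup (satSubgroup S)) with hM
  set q : Additive Kˣ ⧸ M := Submodule.Quotient.mk (Additive.ofMul x) with hqdef
  have hq : ∀ n : ℤ, n • q = 0 → n = 0 := by
    intro n hn
    by_contra hn0
    rw [hqdef, ← Submodule.Quotient.mk_smul, Submodule.Quotient.mk_eq_zero] at hn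
    have hT : x ^ (n : ℤ) ∈ satSubgroup S := by
      have : Additive.toMul (n • Additive.ofMul x) ∈ satSubgroup S := hn
      simpa using this
    obtain ⟨m, hm, hS⟩ := hT
    have hS' : x ^ ((n * m : ℤ)) ∈ S := by
      rw [zpow_mul, zpow_natCast]
      exact_mod_cast hS
    have hSn : x ^ ((-(n * m) : ℤ)) ∈ S := by
      rw [zpow_neg]; exact S.inv_mem hS'
    have hk : ((n.natAbs * m : ℕ) : ℤ) = n * m ∨ ((n.natAbs * m : ℕ) : ℤ) = -(n * m) := by
      push_cast
      rcases abs_cases n with ⟨h, _⟩ | ⟨h, _⟩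
      · left; rw [h]
      · right; rw [h]; ring
    have hmem : x ^ (n.natAbs * m) ∈ S := by
      have : x ^ ((n.natAbs * m : ℕ) : ℤ) ∈ S := by
        rcases hk with h | h <;> rw [h] <;> assumption
      rwa [zpow_natCast] at this
    exact hx (n.natAbs * m) (Nat.mul_pos (Int.natAbs_pos.mpr hn0) hm) hmem
  have hf : Function.Injective (LinearMap.toSpanSingleton ℤ (Additive Kˣ ⧸ M) q) := by
    rw [injective_iff_map_eq_zero]
    intro n hn
    exact hq n hn
  obtain ⟨φ, hφ⟩ := (Module.Baer.of_divisible ℚ).extension_property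
    (LinearMap.toSpanSingleton ℤ (Additive Kˣ ⧸ M) q) hf (LinearMap.toSpanSingleton ℤ ℚ 1)
  have hφq : φ q = 1 := by
    have := congrArg (fun ψ => ψ (1 : ℤ)) hφ
    simpa [LinearMap.toSpanSingleton] using this
  refine ⟨φ ∘ₗ M.mkQ, ?_, ?_⟩
  · intro y hy
    have hyM : Additive.ofMul y ∈ M := by
      show Additive.toMul (Additive.ofMul y) ∈ satSubgroup S
      exact ⟨1, one_pos, by simpa using hy⟩
    simp only [LinearMap.comp_apply, Submodule.mkQ_apply]
    rw [(Submodule.Quotient.mk_eq_zero M).mpr hyM, map_zero]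
  · show φ (M.mkQ (Additive.ofMul x)) ≠ 0
    rw [Submodule.mkQ_apply, ← hqdef, hφq]
    exact one_ne_zero

private noncomputable def evalMap (I : Finset (Additive Kˣ)) :
    GK K →ₗ[ℚ] ({a // a ∈ I} → ℚ) where
  toFun f := fun i => f i.1
  map_add' f g := rfl
  map_smul' c f := rfl

private lemma exists_interp (H : Submodule ℚ (GK K)) (g : GK K)
    (hg : ∀ y ∈ perpSubgroup K H, g (Additive.ofMul y) = 0)
    (I : Finset (Additive Kˣ)) : ∃ f ∈ H, ∀ a ∈ I, f a = g a := by
  classical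
  set ev : GK K →ₗ[ℚ] ({a // a ∈ I} → ℚ) := evalMap I with hev
  by_cases hw : ev g ∈ H.map ev
  · obtain ⟨f, hf, hef⟩ := hw
    exact ⟨f, hf, fun a ha => congrFun hef ⟨a, ha⟩⟩
  exfalso
  set W := H.map ev with hW
  have hq : (Submodule.Quotient.mk (ev g) : ({a // a ∈ I} → ℚ) ⧸ W) ≠ 0 := by
    rw [Ne, Submodule.Quotient.mk_eq_zero]; exact hw
  have hex : ¬ ∀ φ : Module.Dual ℚ ((({a // a ∈ I} → ℚ)) ⧸ W),
      φ (Submodule.Quotient.mk (ev g)) = 0 := by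
    rw [Module.forall_dual_apply_eq_zero_iff]; exact hq
  push_neg at hex
  obtain ⟨φ, hφ⟩ := hex
  set lam : Module.Dual ℚ ({a // a ∈ I} → ℚ) := φ ∘ₗ W.mkQ with hlamdef
  have hlamW : ∀ f ∈ H, lam (ev f) = 0 := by
    intro f hf
    have hmem : ev f ∈ W := ⟨f, hf, rfl⟩
    simp only [hlamdef, LinearMap.comp_apply, Submodule.mkQ_apply]
    rw [(Submodule.Quotient.mk_eq_zero W).mpr hmem, map_zero]
  have hlamg : lam (ev g) ≠ 0 := hφ
  set c : {a // a ∈ I} → ℚ := fun i => lam (fun j => if i = j then 1 else 0) with hc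
  have hlam : ∀ u : {a // a ∈ I} → ℚ, lam u = ∑ i, u i * c i := by
    intro u
    conv_lhs => rw [pi_eq_sum_univ u]
    rw [map_sum]
    exact Finset.sum_congr rfl fun i _ => by rw [map_smul]; simp [smul_eq_mul]; exact Or.inl rfl
  set d : ℕ := ∏ i, (c i).den with hd
  have hdpos : 0 < d := Finset.prod_pos fun i _ => (c i).pos
  have hdne : (d : ℚ) ≠ 0 := Nat.cast_ne_zero.mpr hdpos.ne'
  have hint : ∀ i : {a // a ∈ I}, ∃ n : ℤ, (n : ℚ) = (d : ℚ) * c i := by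
    intro i
    obtain ⟨k, hk⟩ := Finset.dvd_prod_of_mem (fun i => (c i).den) (Finset.mem_univ i)
    refine ⟨(k : ℤ) * (c i).num, ?_⟩
    have hnum : ((c i).den : ℚ) * c i = (c i).num := Rat.den_mul_eq_num _
    rw [← hd] at hk
    rw [hk]
    push_cast
    rw [← hnum]; ring
  choose nn hnn using hint
  set a : Additive Kˣ := ∑ i : {a // a ∈ I}, nn i • i.1 with ha
  have key : ∀ f : GK K, f a = (d : ℚ) * lam (ev f) := by
    intro f
    have h1 : f a = ∑ i : {a // a ∈ I}, (nn i : ℚ) * f i.1 := by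
      rw [ha, map_sum]
      exact Finset.sum_congr rfl fun i _ => by rw [map_zsmul, zsmul_eq_mul]
    rw [h1, hlam (ev f), Finset.mul_sum]
    refine Finset.sum_congr rfl fun i _ => ?_
    rw [hnn i]
    show ((d : ℚ) * c i) * f i.1 = (d : ℚ) * (f i.1 * c i)
    ring
  have hperp : Additive.toMul a ∈ perpSubgroup K H := by
    show ∀ f ∈ H, f (Additive.ofMul (Additive.toMul a)) = 0
    intro f hf
    show f a = 0
    rw [key f, hlamW f hf, mul_zero]
  have hga : g a = 0 := hg _ hperp
  rw [key g] at hga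
  exact hlamg ((mul_eq_zero.mp hga).resolve_left hdne)

private lemma mem_of_vanishing_perp (H : Submodule ℚ (GK K))
    (hcl : IsClosedSubspace K H) (g : GK K)
    (hg : ∀ y ∈ perpSubgroup K H, g (Additive.ofMul y) = 0) : g ∈ H := by
  classical
  letI tq : TopologicalSpace ℚ := ⊥
  haveI : DiscreteTopology ℚ := ⟨rfl⟩
  let ι : GK K → (Additive Kˣ → ℚ) := fun f x => f x
  have hcl' : @IsClosed _ (TopologicalSpace.induced ι Pi.topologicalSpace)
      (H : Set (GK K)) := hcl
  rw [isClosed_induced_iff'] at hcl'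
  apply hcl' g
  rw [mem_closure_iff_nhds]
  intro U hU
  rw [nhds_pi] at hU
  have hp : (fun x : Additive Kˣ => nhds (ι g x)) = fun x => pure (ι g x) := by
    funext x; rw [nhds_discrete]
  rw [hp, Filter.mem_pi] at hU
  obtain ⟨Is, hIs, t, ht, hsub⟩ := hU
  obtain ⟨f, hf, hfg⟩ := exists_interp H g hg hIs.toFinset
  refine ⟨ι f, hsub ?_, f, hf, rfl⟩
  intro x hx
  have hfx : f x = g x := hfg x (hIs.mem_toFinset.mpr hx)
  show ι f x ∈ t x
  rw [show ι f x = ι g x from hfx]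
  exact Filter.mem_pure.mp (ht x)

end Proof

/-- `v((I_v ∩ ℋ)^⊥)` is the saturation of `v(ℋ^⊥)` in the value group
`vK = Kˣ/U_v`; in particular, if `ℋ ⊆ I_v` then `v(ℋ^⊥)` is saturated.  (Subgroups of `vK`
are represented by the corresponding subgroups of `Kˣ` containing `U_v`; the subgroup of
`vK` generated by the image `v(S)` of a subgroup `S ≤ Kˣ` corresponds to `U_v ⊔ S`.) -/
theorem perp_inf_Ival_saturation (K : Type) [Field K] (A : ValuationSubring K)
    (H : Submodule ℚ (GK K)) (hcl : IsClosedSubspace K H) :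
    (∀ x : Kˣ, x ∈ perpSubgroup K (Ival K A ⊓ H) ↔
      ∃ n : ℕ, 0 < n ∧ x ^ n ∈ A.unitGroup ⊔ perpSubgroup K H) ∧
    (H ≤ Ival K A →
      ∀ x : Kˣ, (∃ n : ℕ, 0 < n ∧ x ^ n ∈ A.unitGroup ⊔ perpSubgroup K H) →
        x ∈ A.unitGroup ⊔ perpSubgroup K H) := by
  set S : Subgroup Kˣ := A.unitGroup ⊔ perpSubgroup K H with hS
  constructor
  · intro x
    constructor
    · intro hx
      by_contra hno
      push_neg at hno
      have hno' : ∀ n : ℕ, 0 < n → x ^ n ∉ S := fun n hn => hno n hn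
      obtain ⟨g, hgS, hgx⟩ := exists_functional S x hno'
      have hgI : g ∈ Ival K A := by
        show ∀ y ∈ A.unitGroup, g (Additive.ofMul y) = 0
        intro y hy
        exact hgS y (SetLike.le_def.mp le_sup_left hy)
      have hgH : g ∈ H := by
        refine mem_of_vanishing_perp H hcl g ?_
        intro y hy
        exact hgS y (SetLike.le_def.mp le_sup_right hy)
      exact hgx (hx g (Submodule.mem_inf.mpr ⟨hgI, hgH⟩))
    · rintro ⟨n, hn, hmem⟩
      intro f hf
      obtain ⟨hf1, hf2⟩ := Submodule.mem_inf.mp hf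
      obtain ⟨u, hu, y, hy, huy⟩ := Subgroup.mem_sup.mp hmem
      have hxn : f (Additive.ofMul (x ^ n)) = 0 := by
        rw [← huy]
        have : Additive.ofMul (u * y) = Additive.ofMul u + Additive.ofMul y := rfl
        rw [this, map_add, hf1 u hu, hy f hf2, add_zero]
      rw [ofMul_pow, map_nsmul, nsmul_eq_mul] at hxn
      have := (mul_eq_zero.mp hxn).resolve_left (Nat.cast_ne_zero.mpr hn.ne')
      exact this
  · intro hHI x hx
    obtain ⟨n, hn, hmem⟩ := hx
    have hUperp : A.unitGroup ≤ perpSubgroup K H := by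
      intro u hu f hf
      exact hHI hf u hu
    have hSperp : x ^ n ∈ perpSubgroup K H := by
      obtain ⟨u, hu, y, hy, huy⟩ := Subgroup.mem_sup.mp hmem
      rw [← huy]
      exact (perpSubgroup K H).mul_mem (hUperp hu) hy
    have hxperp : x ∈ perpSubgroup K H := by
      intro f hf
      have hxn : f (Additive.ofMul (x ^ n)) = 0 := hSperp f hf
      rw [ofMul_pow, map_nsmul, nsmul_eq_mul] at hxn
      exact (mul_eq_zero.mp hxn).resolve_left (Nat.cast_ne_zero.mpr hn.ne')
    exact SetLike.le_def.mp le_sup_right hxperp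


end Paper
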